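/- Let p : Y ⟶ X, f : X ⟶ A and g : Y ⟶ A be morphisms of simplicial sets with f ∘ p = g. If p is an epimorphism and both p and g are Kan fibrations, then f is a Kan fibration. -/

import Mathlib

universe u

open CategoryTheory Simplicial CategoryTheory.Limits Opposite

/-- A morphism of simplicial sets is a Kan fibration if it has the right lifting property
with respect to all horn inclusions `Λ[n, k] ⟶ Δ[n]` with `n ≥ 1`, `0 ≤ k ≤ n`. -/
def KanFibration {X Y : SSet.{u}} (f : X ⟶ Y) : Prop :=
  ∀ ⦃n : ℕ⦄, 1 ≤ n → ∀ k : Fin (n + 1), HasLiftingProperty (SSet.horn.{u} n k).ι f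

open SimplexCategory

namespace KanFibAux

open SSet SSet.stdSimplex

/-- Quantified compatibility for a family of would-be faces of a horn map. -/
def QuantCompat {S : SSet.{u}} {n : ℕ} {i : Fin (n + 2)}
    (y : ∀ j : Fin (n + 2), j ≠ i → S _⦋n⦌) : Prop :=
  ∀ ⦃m : SimplexCategory⦄ (j₀ j : Fin (n + 2)) (hj₀ : j₀ ≠ i) (hj : j ≠ i)
    (g₀ g : m ⟶ ⦋n⦌), g₀ ≫ δ j₀ = g ≫ δ j →
      S.map g₀.op (y j₀ hj₀) = S.map g.op (y j hj)

/-- The underlying `SimplexCategory` morphism of a simplex of the standard simplex,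
with the domain presented as `⦋m⦌`. -/
def toHom {n : ℕ} {m : SimplexCategoryᵒᵖ} (f : (Δ[n] : SSet.{u}).obj m) :
    (⦋m.unop.len⦌ : SimplexCategory) ⟶ ⦋n⦌ :=
  objEquiv f

lemma exists_missed {n : ℕ} {i : Fin (n + 2)} {m : SimplexCategoryᵒᵖ}
    (f : (Λ[n + 1, i] : SSet.{u}).obj m) :
    ∃ j, j ≠ i ∧ ∀ x, (toHom f.1).toOrderHom x ≠ j := by
  have hf := f.2
  rw [SSet.mem_horn_iff, Set.ne_univ_iff_exists_notMem] at hf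
  obtain ⟨j, hj⟩ := hf
  simp only [Set.mem_union, Set.mem_range, Set.mem_singleton_iff, not_or, not_exists] at hj
  exact ⟨j, fun h => hj.2 (h ▸ rfl), fun x h => hj.1 x h⟩

noncomputable def hornApp {S : SSet.{u}} {n : ℕ} {i : Fin (n + 2)}
    (y : ∀ j : Fin (n + 2), j ≠ i → S _⦋n⦌) (m : SimplexCategoryᵒᵖ)
    (f : (Λ[n + 1, i] : SSet.{u}).obj m) : S.obj m :=
  S.map (factor_δ (toHom f.1) (exists_missed f).choose).op
    (y (exists_missed f).choose (exists_missed f).choose_spec.1)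

lemma hornApp_eq {S : SSet.{u}} {n : ℕ} {i : Fin (n + 2)}
    (y : ∀ j : Fin (n + 2), j ≠ i → S _⦋n⦌) (hy : QuantCompat y) (m : SimplexCategoryᵒᵖ)
    (f : (Λ[n + 1, i] : SSet.{u}).obj m) {j : Fin (n + 2)} (hj : j ≠ i)
    (g : (⦋m.unop.len⦌ : SimplexCategory) ⟶ ⦋n⦌) (hg : g ≫ δ j = toHom f.1) :
    hornApp y m f = S.map g.op (y j hj) := by
  apply hy _ _ _ hj
  rw [factor_δ_spec (toHom f.1) _ (exists_missed f).choose_spec.2, hg]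

lemma toHom_map {n : ℕ} {m₁ m₂ : SimplexCategoryᵒᵖ} (φ : m₁ ⟶ m₂)
    (f : (Δ[n] : SSet.{u}).obj m₁) :
    toHom ((Δ[n] : SSet.{u}).map φ f) = φ.unop ≫ toHom f := rfl

noncomputable def hornHomMk {S : SSet.{u}} {n : ℕ} {i : Fin (n + 2)}
    (y : ∀ j : Fin (n + 2), j ≠ i → S _⦋n⦌) (hy : QuantCompat y) :
    (Λ[n + 1, i] : SSet.{u}) ⟶ S where
  app m := TypeCat.ofHom fun f => hornApp y m f
  naturality m₁ m₂ φ := by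
    ext f
    obtain ⟨j, hj, hmiss⟩ := exists_missed f
    have h₁ : hornApp y m₁ f = S.map (factor_δ (toHom f.1) j).op (y j hj) :=
      hornApp_eq y hy m₁ f hj _ (factor_δ_spec (toHom f.1) j hmiss)
    have h₂ : hornApp y m₂ ((Λ[n + 1, i] : SSet.{u}).map φ f)
        = S.map (φ.unop ≫ factor_δ (toHom f.1) j).op (y j hj) := by
      refine hornApp_eq y hy m₂ _ hj _ ?_
      rw [Category.assoc, factor_δ_spec (toHom f.1) j hmiss]
      rfl
    change hornApp y m₂ ((Λ[n + 1, i] : SSet.{u}).map φ f) = S.map φ (hornApp y m₁ f)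
    rw [h₁, h₂, op_comp, S.map_comp]
    rfl

lemma hornHomMk_face {S : SSet.{u}} {n : ℕ} {i : Fin (n + 2)}
    (y : ∀ j : Fin (n + 2), j ≠ i → S _⦋n⦌) (hy : QuantCompat y)
    (j : Fin (n + 2)) (hj : j ≠ i) :
    (hornHomMk y hy).app _ (SSet.horn.face i j hj) = y j hj := by
  have : hornApp y _ (SSet.horn.face i j hj) = S.map (𝟙 (⦋n⦌ : SimplexCategory)).op (y j hj) := by
    refine hornApp_eq y hy _ _ hj _ ?_
    · simp only [Category.id_comp]; rfl
  rw [hornHomMk]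
  change hornApp y _ (SSet.horn.face i j hj) = y j hj
  rw [this, op_id, S.map_id]
  rfl

lemma δ_apply {n : ℕ} (i : Fin (n + 2)) (x : Fin (n + 1)) :
    (δ i).toOrderHom x = i.succAbove x := rfl

lemma comp_apply' {a b c : SimplexCategory} (f : a ⟶ b) (g : b ⟶ c)
    (x : Fin (a.len + 1)) : (f ≫ g).toOrderHom x = g.toOrderHom (f.toOrderHom x) := rfl

lemma quantCompat_of_fin2 {S : SSet.{u}} {i : Fin 2}
    (y : ∀ j : Fin 2, j ≠ i → S _⦋0⦌) : QuantCompat y := by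
  intro m j₀ j hj₀ hj g₀ g he
  obtain rfl : j₀ = j := by omega
  obtain rfl : g₀ = g := by rwa [cancel_mono] at he
  rfl

lemma quantCompat_key {S : SSet.{u}} {n : ℕ} {i : Fin (n + 3)}
    (y : ∀ j : Fin (n + 3), j ≠ i → S _⦋n + 1⦌)
    (hface : ∀ (c d : Fin (n + 2)), c ≤ d → ∀ (hc : c.castSucc ≠ i) (hd : d.succ ≠ i),
      S.map (δ c).op (y d.succ hd) = S.map (δ d).op (y c.castSucc hc))
    {m : SimplexCategory} (j₀ j : Fin (n + 3)) (hj₀ : j₀ ≠ i) (hj : j ≠ i)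
    (g₀ g : m ⟶ ⦋n + 1⦌) (he : g₀ ≫ δ j₀ = g ≫ δ j) (hlt : j₀ < j) :
    S.map g₀.op (y j₀ hj₀) = S.map g.op (y j hj) := by
  obtain ⟨m, rfl⟩ : ∃ m' : ℕ, (⦋m'⦌ : SimplexCategory) = m := ⟨m.len, mk_len m⟩
  obtain ⟨c, rfl⟩ : ∃ c : Fin (n + 2), c.castSucc = j₀ :=
    ⟨j₀.castPred (Fin.ne_last_of_lt hlt), Fin.castSucc_castPred _ _⟩
  obtain ⟨d, rfl⟩ : ∃ d : Fin (n + 2), d.succ = j :=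
    ⟨j.pred (Fin.ne_zero_of_lt hlt), Fin.succ_pred _ _⟩
  have hcd : c ≤ d := by rwa [Fin.castSucc_lt_succ_iff] at hlt
  have hept : ∀ x, Fin.succAbove c.castSucc (g₀.toOrderHom x)
      = Fin.succAbove d.succ (g.toOrderHom x) := by
    intro x
    have := congrArg (fun ψ => ψ.toOrderHom x) he
    simpa only [comp_apply', δ_apply] using this
  have hmg : ∀ x, g.toOrderHom x ≠ c := by
    intro x hx
    have h1 := hept x
    have h2 : Fin.succAbove d.succ c = c.castSucc :=
      Fin.succAbove_of_castSucc_lt _ _ (Fin.castSucc_lt_succ_iff.2 hcd)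
    rw [hx, h2] at h1
    exact Fin.succAbove_ne _ _ h1
  have hmg₀ : ∀ x, g₀.toOrderHom x ≠ d := by
    intro x hx
    have h1 := hept x
    have h2 : Fin.succAbove c.castSucc d = d.succ :=
      Fin.succAbove_of_le_castSucc _ _ (Fin.castSucc_le_castSucc_iff.2 hcd)
    rw [hx, h2] at h1
    exact Fin.succAbove_ne _ _ h1.symm
  have s₀ : factor_δ g₀ d ≫ δ d = g₀ := factor_δ_spec g₀ d hmg₀
  have s₁ : factor_δ g c ≫ δ c = g := factor_δ_spec g c hmg
  have hh : factor_δ g₀ d = factor_δ g c := by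
    have e1 : factor_δ g₀ d ≫ (δ d ≫ δ c.castSucc) = g ≫ δ d.succ := by
      rw [← Category.assoc, s₀, he]
    have e2 : factor_δ g c ≫ (δ d ≫ δ c.castSucc) = g ≫ δ d.succ := by
      rw [← δ_comp_δ hcd, ← Category.assoc, s₁]
    exact (cancel_mono _).1 (e1.trans e2.symm)
  have mcp : ∀ {a b c : SimplexCategory} (f : a ⟶ b) (g : b ⟶ c) (z : S.obj (op c)),
      S.map (f ≫ g).op z = S.map f.op (S.map g.op z) := by
    intro a b c f g z
    rw [op_comp, S.map_comp]; rfl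
  calc S.map g₀.op (y c.castSucc hj₀)
      = S.map (factor_δ g₀ d).op (S.map (δ d).op (y c.castSucc hj₀)) := by
        conv_lhs => rw [← s₀]
        exact mcp _ _ _
    _ = S.map (factor_δ g₀ d).op (S.map (δ c).op (y d.succ hj)) := by
        rw [hface c d hcd hj₀ hj]
    _ = S.map g.op (y d.succ hj) := by
        rw [hh]
        conv_rhs => rw [← s₁]
        exact (mcp _ _ _).symm

lemma quantCompat_of_compat {S : SSet.{u}} {n : ℕ} {i : Fin (n + 3)}
    (y : ∀ j : Fin (n + 3), j ≠ i → S _⦋n + 1⦌)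
    (hface : ∀ (c d : Fin (n + 2)), c ≤ d → ∀ (hc : c.castSucc ≠ i) (hd : d.succ ≠ i),
      S.map (δ c).op (y d.succ hd) = S.map (δ d).op (y c.castSucc hc)) :
    QuantCompat y := by
  intro m j₀ j hj₀ hj g₀ g he
  rcases lt_trichotomy j₀ j with hlt | rfl | hlt
  · exact quantCompat_key y hface j₀ j hj₀ hj g₀ g he hlt
  · obtain rfl : g₀ = g := by rwa [cancel_mono] at he
    rfl
  · exact (quantCompat_key y hface j j₀ hj hj₀ g g₀ he.symm hlt).symm

section Cells

variable {Y X : SSet.{u}} (p : Y ⟶ X) {n : ℕ} (k : Fin (n + 1)) (u : (Λ[n, k] : SSet.{u}) ⟶ X)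

/-- A cell: a nondegenerate simplex of the horn containing the vertex `k`. -/
def Cell (m : ℕ) : Type :=
  {e : Fin (m + 1) →o Fin (n + 1) //
    StrictMono ⇑e ∧ (∃ a, e a = k) ∧ Set.range ⇑e ∪ {k} ≠ Set.univ}

variable {k}

def cellElt {m : ℕ} (c : Cell k m) : (Λ[n, k] : SSet.{u}).obj (op ⦋m⦌) :=
  ⟨SSet.stdSimplex.objMk c.1, c.2.2.2⟩

def Cell.face {m : ℕ} (c : Cell k (m + 1)) (a : Fin (m + 2)) (ha : c.1 a ≠ k) :
    Cell k m := by
  refine ⟨c.1.comp (δ a).toOrderHom, c.2.1.comp (Fin.strictMono_succAbove a), ?_, ?_⟩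
  · obtain ⟨κ, hκ⟩ := c.2.2.1
    have hκa : κ ≠ a := fun h => ha (h ▸ hκ)
    obtain ⟨b, hb⟩ := Fin.exists_succAbove_eq hκa
    refine ⟨b, ?_⟩
    show c.1 ((δ a).toOrderHom b) = k
    rw [show (δ a).toOrderHom b = κ from hb, hκ]
  · intro h
    apply c.2.2.2
    apply Set.eq_univ_of_univ_subset
    have hsub : Set.range ⇑((c.1).comp (δ a).toOrderHom) ∪ {k} ⊆ Set.range ⇑c.1 ∪ {k} := by
      apply Set.union_subset_union_left
      rintro x ⟨b, rfl⟩
      exact ⟨a.succAbove b, rfl⟩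
    calc Set.univ = Set.range ⇑((c.1).comp (δ a).toOrderHom) ∪ {k} := h.symm
      _ ⊆ Set.range ⇑c.1 ∪ {k} := hsub

lemma cellElt_face {m : ℕ} (c : Cell k (m + 1)) (a : Fin (m + 2)) (ha : c.1 a ≠ k) :
    (Λ[n, k] : SSet.{u}).map (δ a).op (cellElt c) = cellElt (c.face a ha) :=
  Subtype.ext rfl

variable (k) in
/-- Level data: a compatible lift of all `m`-cells along `p`. -/
def LData (m : ℕ) : Type u :=
  {F : Cell k m → Y.obj (op ⦋m⦌) // ∀ c, p.app _ (F c) = u.app _ (cellElt c)}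

def FaceRel {m : ℕ} (D' : LData p k u (m + 1)) (D : LData p k u m) : Prop :=
  ∀ (c : Cell k (m + 1)) (a : Fin (m + 2)) (ha : c.1 a ≠ k),
    Y.map (δ a).op (D'.1 c) = D.1 (c.face a ha)

noncomputable def kappa {m : ℕ} (c : Cell k m) : Fin (m + 1) := c.2.2.1.choose

lemma kappa_spec {m : ℕ} (c : Cell k m) : c.1 (kappa c) = k := c.2.2.1.choose_spec

lemma ne_k_of_ne_kappa {m : ℕ} (c : Cell k m) {j : Fin (m + 1)} (hj : j ≠ kappa c) :
    c.1 j ≠ k := fun h => hj (c.2.1.injective (h.trans (kappa_spec c).symm))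

/-- The candidate faces for the horn of a new cell. -/
noncomputable def yFam {m : ℕ} (D : LData p k u m) (c : Cell k (m + 1)) :
    ∀ j : Fin (m + 2), j ≠ kappa c → Y _⦋m⦌ :=
  fun j hj => D.1 (c.face j (ne_k_of_ne_kappa c hj))

end Cells

section Build

variable {Y X : SSet.{u}} (p : Y ⟶ X) {n : ℕ} {k : Fin (n + 1)} (u : (Λ[n, k] : SSet.{u}) ⟶ X)

/-- Fill one new cell of dimension `m+1`, using the horn-filling property of `p`. -/
noncomputable def buildOne (hp : KanFibration p) {m : ℕ} (D : LData p k u m)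
    (c : Cell k (m + 1)) (hq : QuantCompat (yFam p u D c)) :
    {z : Y.obj (op ⦋m + 1⦌) // p.app _ z = u.app _ (cellElt c) ∧
      ∀ (a : Fin (m + 2)) (ha : c.1 a ≠ k),
        Y.map (δ a).op z = D.1 (c.face a ha)} := by
  set σ : (Λ[m + 1, kappa c] : SSet.{u}) ⟶ Y := hornHomMk _ hq with hσ
  set bx : (Δ[m + 1] : SSet.{u}) ⟶ X := (SSet.yonedaEquiv (X := X) (n := ⦋m + 1⦌)).symm (u.app _ (cellElt c))
    with hbx
  have hbxapp : ∀ (mm : SimplexCategoryᵒᵖ) (s : (Δ[m + 1] : SSet.{u}).obj mm),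
      bx.app mm s = X.map (SSet.stdSimplex.objEquiv s).op (u.app _ (cellElt c)) :=
    fun mm s => rfl
  have hw : σ ≫ p = (SSet.horn (m + 1) (kappa c)).ι ≫ bx := by
    apply SSet.horn.hom_ext
    intro j hj
    have h1 : (σ ≫ p).app _ (SSet.horn.face (kappa c) j hj)
        = p.app _ (yFam p u D c j hj) := by
      rw [NatTrans.comp_app]
      simp only [types_comp_apply]
      rw [hσ, hornHomMk_face]
    rw [h1]
    have hD : p.app _ (yFam p u D c j hj)
        = u.app _ (cellElt (c.face j (ne_k_of_ne_kappa c hj))) := D.2 _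
    rw [hD]
    have h2 : ((SSet.horn (m + 1) (kappa c)).ι ≫ bx).app _
          (SSet.horn.face (kappa c) j hj)
        = X.map (δ j).op (u.app _ (cellElt c)) := by
      rw [NatTrans.comp_app]
      simp only [types_comp_apply]
      exact hbxapp _ _
    rw [h2, ← FunctorToTypes.naturality, cellElt_face c j (ne_k_of_ne_kappa c hj)]
  have sq : CommSq σ ((SSet.horn (m + 1) (kappa c)).ι) p bx := ⟨hw⟩
  have hl := ((hp (Nat.succ_le_succ (Nat.zero_le m)) (kappa c)).sq_hasLift sq).exists_lift.some
  refine ⟨hl.l.app _ ((SSet.stdSimplex.objEquiv.symm (𝟙 ⦋m + 1⦌) : Δ[m + 1] _⦋m + 1⦌)), ?_, ?_⟩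
  · have := ConcreteCategory.congr_hom (NatTrans.congr_app hl.fac_right (op ⦋m + 1⦌))
      ((SSet.stdSimplex.objEquiv.symm (𝟙 ⦋m + 1⦌) : Δ[m + 1] _⦋m + 1⦌))
    rw [FunctorToTypes.comp] at this
    rw [this, hbxapp, Equiv.apply_symm_apply, op_id, X.map_id]
    rfl
  · intro a ha
    have ha' : a ≠ kappa c := fun h => ha (h ▸ kappa_spec c)
    have hnat := FunctorToTypes.naturality hl.l (δ a).op ((SSet.stdSimplex.objEquiv.symm (𝟙 ⦋m + 1⦌) : Δ[m + 1] _⦋m + 1⦌))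
    have hel : (Δ[m + 1] : SSet.{u}).map (δ a).op ((SSet.stdSimplex.objEquiv.symm (𝟙 ⦋m + 1⦌) : Δ[m + 1] _⦋m + 1⦌))
        = (SSet.horn.face (kappa c) a ha').1 := by
      rw [SSet.stdSimplex.map_apply]
      apply congrArg
      rw [Equiv.apply_symm_apply, Category.comp_id]
      rfl
    rw [← hnat, hel]
    have := ConcreteCategory.congr_hom (NatTrans.congr_app hl.fac_left (op ⦋m⦌))
      (SSet.horn.face (kappa c) a ha')
    rw [FunctorToTypes.comp] at this
    have hincl : ((SSet.horn (m + 1) (kappa c)).ι).app _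
        (SSet.horn.face (kappa c) a ha') = (SSet.horn.face (kappa c) a ha').1 := rfl
    rw [hincl] at this
    rw [this, hσ, hornHomMk_face]
    rfl

end Build

section Tower

variable {Y X : SSet.{u}} (p : Y ⟶ X) {n : ℕ} {k : Fin (n + 1)} (u : (Λ[n, k] : SSet.{u}) ⟶ X)

lemma succAbove_comm {m : ℕ} {c' d' : Fin (m + 2)} (hcd : c' ≤ d') (x : Fin (m + 1)) :
    (d'.succ).succAbove (c'.succAbove x) = (c'.castSucc).succAbove (d'.succAbove x) := by
  have h := congrArg (fun (ψ : (⦋m⦌ : SimplexCategory) ⟶ ⦋m + 2⦌) => ψ.toOrderHom x)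
    (δ_comp_δ hcd)
  simpa only [comp_apply', δ_apply] using h

lemma hq_succ {m : ℕ} (Dp : LData p k u m) (D : LData p k u (m + 1))
    (rel : FaceRel p u D Dp) (c : Cell k (m + 2)) : QuantCompat (yFam p u D c) := by
  apply quantCompat_of_compat
  intro c' d' hcd hc hd
  have vA : (c.face d'.succ (ne_k_of_ne_kappa c hd)).1 c' = c.1 c'.castSucc := by
    show c.1 ((d'.succ).succAbove c') = _
    rw [Fin.succAbove_of_castSucc_lt _ _ (Fin.castSucc_lt_succ_iff.2 hcd)]
  have vB : (c.face c'.castSucc (ne_k_of_ne_kappa c hc)).1 d' = c.1 d'.succ := by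
    show c.1 ((c'.castSucc).succAbove d') = _
    rw [Fin.succAbove_of_le_castSucc _ _ (Fin.castSucc_le_castSucc_iff.2 hcd)]
  have hA : (c.face d'.succ (ne_k_of_ne_kappa c hd)).1 c' ≠ k := by
    rw [vA]; exact ne_k_of_ne_kappa c hc
  have hB : (c.face c'.castSucc (ne_k_of_ne_kappa c hc)).1 d' ≠ k := by
    rw [vB]; exact ne_k_of_ne_kappa c hd
  have cellEq : (c.face d'.succ (ne_k_of_ne_kappa c hd)).face c' hA
      = (c.face c'.castSucc (ne_k_of_ne_kappa c hc)).face d' hB := by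
    apply Subtype.ext
    apply OrderHom.ext
    funext x
    show c.1 ((d'.succ).succAbove (c'.succAbove x)) = c.1 ((c'.castSucc).succAbove (d'.succAbove x))
    rw [succAbove_comm hcd]
  show Y.map (δ c').op (D.1 (c.face d'.succ (ne_k_of_ne_kappa c hd)))
      = Y.map (δ d').op (D.1 (c.face c'.castSucc (ne_k_of_ne_kappa c hc)))
  rw [rel _ c' hA, rel _ d' hB, cellEq]

/-- The tower of partial lifts, two consecutive levels at a time. -/
noncomputable def tower (hp : KanFibration p)
    (hs : Function.Surjective (p.app (op ⦋0⦌))) :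
    ∀ m : ℕ, (Σ' (D : LData p k u m) (D' : LData p k u (m + 1)), FaceRel p u D' D) := fun m => match m with
  | 0 => by
    refine ⟨⟨fun c => (hs (u.app _ (cellElt c))).choose,
      fun c => (hs (u.app _ (cellElt c))).choose_spec⟩, ?_⟩
    set D0 : LData p k u 0 := ⟨fun c => (hs (u.app _ (cellElt c))).choose,
      fun c => (hs (u.app _ (cellElt c))).choose_spec⟩
    exact ⟨⟨fun c => (buildOne p u hp D0 c (quantCompat_of_fin2 _)).1,
        fun c => (buildOne p u hp D0 c (quantCompat_of_fin2 _)).2.1⟩,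
      fun c a ha => (buildOne p u hp D0 c (quantCompat_of_fin2 _)).2.2 a ha⟩
  | m + 1 =>
    ⟨(tower hp hs m).2.1,
      ⟨fun c => (buildOne p u hp (tower hp hs m).2.1 c
          (hq_succ p u (tower hp hs m).1 (tower hp hs m).2.1 (tower hp hs m).2.2 c)).1,
        fun c => (buildOne p u hp (tower hp hs m).2.1 c
          (hq_succ p u (tower hp hs m).1 (tower hp hs m).2.1 (tower hp hs m).2.2 c)).2.1⟩,
      fun c a ha => (buildOne p u hp (tower hp hs m).2.1 c
          (hq_succ p u (tower hp hs m).1 (tower hp hs m).2.1 (tower hp hs m).2.2 c)).2.2 a ha⟩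

end Tower

section Final

variable {Y X : SSet.{u}} (p : Y ⟶ X)

def faceCell {N : ℕ} (k : Fin (N + 2)) (j : Fin (N + 2)) (hj : j ≠ k) : Cell k N := by
  refine ⟨(δ j).toOrderHom, Fin.strictMono_succAbove j, ?_, ?_⟩
  · obtain ⟨b, hb⟩ := Fin.exists_succAbove_eq (Ne.symm hj)
    exact ⟨b, hb⟩
  · intro h
    have hjmem : j ∈ Set.range ⇑(δ j).toOrderHom ∪ {k} := h ▸ Set.mem_univ j
    rcases hjmem with ⟨b, hb⟩ | hb
    · exact Fin.succAbove_ne j b hb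
    · exact hj hb

lemma cellElt_faceCell {N : ℕ} (k : Fin (N + 2)) (j : Fin (N + 2)) (hj : j ≠ k) :
    cellElt (faceCell k j hj) = SSet.horn.face k j hj :=
  Subtype.ext rfl

lemma hq_final_succ {M : ℕ} {k : Fin (M + 3)} (u : (Λ[M + 2, k] : SSet.{u}) ⟶ X)
    (Dp : LData p k u M) (D : LData p k u (M + 1)) (rel : FaceRel p u D Dp) :
    QuantCompat (fun (j : Fin (M + 3)) (hj : j ≠ k) => D.1 (faceCell k j hj)) := by
  apply quantCompat_of_compat
  intro c' d' hcd hc hd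
  have vA : (faceCell k d'.succ hd).1 c' = c'.castSucc := by
    show (d'.succ).succAbove c' = _
    rw [Fin.succAbove_of_castSucc_lt _ _ (Fin.castSucc_lt_succ_iff.2 hcd)]
  have vB : (faceCell k c'.castSucc hc).1 d' = d'.succ := by
    show (c'.castSucc).succAbove d' = _
    rw [Fin.succAbove_of_le_castSucc _ _ (Fin.castSucc_le_castSucc_iff.2 hcd)]
  have hA : (faceCell k d'.succ hd).1 c' ≠ k := by rw [vA]; exact hc
  have hB : (faceCell k c'.castSucc hc).1 d' ≠ k := by rw [vB]; exact hd
  have cellEq : (faceCell k d'.succ hd).face c' hA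
      = (faceCell k c'.castSucc hc).face d' hB := by
    apply Subtype.ext
    apply OrderHom.ext
    funext x
    exact succAbove_comm hcd x
  show Y.map (δ c').op (D.1 (faceCell k d'.succ hd))
      = Y.map (δ d').op (D.1 (faceCell k c'.castSucc hc))
  rw [rel _ c' hA, rel _ d' hB, cellEq]

lemma horn_lift (hs : ∀ m, Function.Surjective (p.app m)) (hp : KanFibration p)
    {n : ℕ} (hn : 1 ≤ n) (k : Fin (n + 1)) (u : (Λ[n, k] : SSet.{u}) ⟶ X) :
    ∃ w : (Λ[n, k] : SSet.{u}) ⟶ Y, w ≫ p = u := by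
  obtain ⟨N, rfl⟩ : ∃ N, n = N + 1 := ⟨n - 1, by omega⟩
  have hqy : QuantCompat (fun (j : Fin (N + 2)) (hj : j ≠ k) =>
      ((tower p u hp (hs _) N).1).1 (faceCell k j hj)) := by
    cases N with
    | zero => exact quantCompat_of_fin2 _
    | succ M =>
      exact hq_final_succ p u (tower p u hp (hs _) M).1 (tower p u hp (hs _) M).2.1
        (tower p u hp (hs _) M).2.2
  refine ⟨hornHomMk _ hqy, ?_⟩
  apply SSet.horn.hom_ext
  intro j hj
  have h1 : (hornHomMk _ hqy ≫ p).app _ (SSet.horn.face k j hj)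
      = p.app _ (((tower p u hp (hs _) N).1).1 (faceCell k j hj)) := by
    rw [FunctorToTypes.comp, hornHomMk_face]
  rw [h1]
  have h2 : p.app _ (((tower p u hp (hs _) N).1).1 (faceCell k j hj))
      = u.app _ (cellElt (faceCell k j hj)) := ((tower p u hp (hs _) N).1).2 _
  rw [h2, cellElt_faceCell]

end Final

end KanFibAux

/-- If `p` is an epimorphism, `p` and `g = f ∘ p` are Kan fibrations, then `f` is a Kan
fibration. -/
theorem kanFibration_of_epi_comp {Y X A : SSet} (p : Y ⟶ X) (f : X ⟶ A) (g : Y ⟶ A)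
    (hcomp : p ≫ f = g) (hp_epi : Epi p) (hp : KanFibration p) (hg : KanFibration g) :
    KanFibration f := by
  subst hcomp
  intro n hn k
  constructor
  intro top bot sqc
  have hs : ∀ m, Function.Surjective (p.app m) := by
    intro m
    rw [← CategoryTheory.epi_iff_surjective]
    haveI := hp_epi
    infer_instance
  obtain ⟨w, hw⟩ := KanFibAux.horn_lift p hs hp hn k top
  have sq2 : CommSq w ((SSet.horn n k)).ι (p ≫ f) bot := ⟨by
    rw [← Category.assoc, hw, sqc.w]⟩
  have hl := ((hg hn k).sq_hasLift sq2).exists_lift.some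
  exact CommSq.HasLift.mk ⟨hl.l ≫ p, by
    rw [← Category.assoc, ← hw]
    exact congrArg (· ≫ p) hl.fac_left, by
    rw [Category.assoc]
    exact hl.fac_right⟩
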